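/- For every integer k ≥ 3 and every even positive integer n, the number of alternating permutations of length n avoiding 12⋯k equals the number of alternating permutations of length n avoiding 12⋯(k-2)k(k-1). -/

import Mathlib

open Function

def Contains {n k : ℕ} (p : Fin n → Fin n) (q : Fin k → Fin k) : Prop :=
  ∃ f : Fin k → Fin n, StrictMono f ∧ ∀ a b : Fin k, q a < q b ↔ p (f a) < p (f b)

def Avoids {n k : ℕ} (p : Fin n → Fin n) (q : Fin k → Fin k) : Prop :=
  ¬ Contains p q

noncomputable def rank {n : ℕ} (p : Fin n → Fin n) (i : Fin n) : ℕ :=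
  sSup {m | ∃ f : Fin m → Fin n, StrictMono f ∧ StrictMono (p ∘ f) ∧
    ∃ hm : 0 < m, f ⟨m - 1, Nat.sub_lt hm Nat.one_pos⟩ = i}

noncomputable def corank {n : ℕ} (p : Fin n → Fin n) (i : Fin n) : ℕ :=
  sSup {m | ∃ f : Fin m → Fin n, StrictMono f ∧ StrictMono (p ∘ f) ∧
    ∃ hm : 0 < m, f ⟨0, hm⟩ = i}

def Alternating {n : ℕ} (p : Fin n → Fin n) : Prop :=
  ∀ (i : ℕ) (h : i + 1 < n), p ⟨i, by omega⟩ < p ⟨i + 1, h⟩ ↔ i % 2 = 0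

def IsPeak {n : ℕ} (p : Fin n → Fin n) (i : Fin n) : Prop :=
  (∀ _ : 0 < i.1, p ⟨i.1 - 1, lt_of_le_of_lt (Nat.sub_le _ _) i.2⟩ < p i) ∧
  (∀ h : i.1 + 1 < n, p ⟨i.1 + 1, h⟩ < p i)

def IsValley {n : ℕ} (p : Fin n → Fin n) (i : Fin n) : Prop :=
  (∀ _ : 0 < i.1, p i < p ⟨i.1 - 1, lt_of_le_of_lt (Nat.sub_le _ _) i.2⟩) ∧
  (∀ h : i.1 + 1 < n, p i < p ⟨i.1 + 1, h⟩)

namespace AltPf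
variable {n : ℕ}

def Chn (p : Fin n → Fin n) {m : ℕ} (g : Fin m → Fin n) : Prop :=
  ∀ i j : Fin m, i < j → g i < g j ∧ p (g i) < p (g j)

def Seed (k : ℕ) (p : Fin n → Fin n) (e : Fin n) : Prop :=
  ∃ g : Fin (k - 3) → Fin n, Chn p g ∧ ∀ i, g i < e ∧ p (g i) < p e

def Ins (k : ℕ) (p : Fin n → Fin n) (j : Fin n) : Prop :=
  ∃ e, Seed k p e ∧ e < j ∧ p e < p j

def BadT (k : ℕ) (p : Fin n → Fin n) : Prop :=
  ∃ e a b, Seed k p e ∧ e < a ∧ a < b ∧ p e < p a ∧ p a < p b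

def BadS (k : ℕ) (p : Fin n → Fin n) : Prop :=
  ∃ e a b, Seed k p e ∧ e < a ∧ a < b ∧ p e < p b ∧ p b < p a

def Rearr (k : ℕ) (p q : Fin n → Fin n) : Prop :=
  (∀ j, ¬ Ins k p j → q j = p j) ∧
  (∀ j, Ins k p j → ∃ s, ¬ Ins k p s ∧ Seed k p s ∧ s < j ∧ p s < q j)

variable {k : ℕ} {p q : Fin n → Fin n}

lemma ins_closure {x y : Fin n} (hx : Ins k p x) (hxy : x < y) (hv : p x < p y) :
    Ins k p y := by
  obtain ⟨e, he, hex, hev⟩ := hx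
  exact ⟨e, he, lt_trans hex hxy, lt_trans hev hv⟩

lemma inner2outer : ∀ j : Fin n, Ins k p j →
    ∃ s, ¬ Ins k p s ∧ Seed k p s ∧ s < j ∧ p s < p j := by
  have H : ∀ m : ℕ, ∀ j : Fin n, j.1 = m → Ins k p j →
      ∃ s, ¬ Ins k p s ∧ Seed k p s ∧ s < j ∧ p s < p j := by
    intro m
    induction m using Nat.strong_induction_on with
    | _ m ih =>
      intro j hjm hj
      obtain ⟨e, he, hej, hev⟩ := hj
      by_cases hIe : Ins k p e
      · obtain ⟨s, h1, h2, h3, h4⟩ := ih e.1 (by have : e.1 < j.1 := hej; omega) e rfl hIe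
        exact ⟨s, h1, h2, lt_trans h3 hej, lt_trans h4 hev⟩
      · exact ⟨e, hIe, he, hej, hev⟩
  exact fun j => H j.1 j rfl

/-- `¬ BadT` is equivalent to: inside values are decreasing. -/
lemma badT_iff_dec (hpi : Injective p) :
    ¬ BadT k p ↔ ∀ a b : Fin n, Ins k p a → Ins k p b → a < b → p b < p a := by
  constructor
  · intro h a b hIa _ hab
    obtain ⟨e, he, hea, hev⟩ := hIa
    rcases lt_trichotomy (p b) (p a) with h' | h' | h'
    · exact h'
    · exact absurd (hpi h') (by intro hh; subst hh; exact lt_irrefl _ hab)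
    · exact absurd (⟨e, a, b, he, hea, hab, hev, h'⟩ : BadT k p) h
  · rintro h ⟨e, a, b, he, hea, hab, hva, hvb⟩
    exact lt_asymm hvb
      (h a b ⟨e, he, hea, hva⟩ ⟨e, he, lt_trans hea hab, lt_trans hva hvb⟩ hab)

/-- `¬ BadS` is equivalent to the greedy-min condition. -/
lemma badS_iff_sig (hpi : Injective p) :
    ¬ BadS k p ↔ ∀ a b : Fin n, Ins k p a → a < b →
      (∃ e, Seed k p e ∧ e < a ∧ p e < p b) → p a < p b := by
  constructor
  · intro h a b hIa hab ⟨e, he, hea, hev⟩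
    rcases lt_trichotomy (p a) (p b) with h' | h' | h'
    · exact h'
    · exact absurd (hpi h') (by intro hh; subst hh; exact lt_irrefl _ hab)
    · exact absurd (⟨e, a, b, he, hea, hab, hev, h'⟩ : BadS k p) h
  · rintro h ⟨e, a, b, he, hea, hab, hvb, hvba⟩
    have : p a < p b := h a b ⟨e, he, hea, lt_trans hvb hvba⟩ hab ⟨e, he, hea, hvb⟩
    exact lt_asymm this hvba

lemma alt_lt (hp : Alternating p) {j : ℕ} (h : j + 1 < n) (he : j % 2 = 0) :
    p ⟨j, by omega⟩ < p ⟨j + 1, h⟩ := (hp j h).2 he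

lemma alt_gt (hp : Alternating p) (hpi : Injective p) {j : ℕ} (h : j + 1 < n)
    (ho : j % 2 = 1) : p ⟨j + 1, h⟩ < p ⟨j, by omega⟩ := by
  have h1 : ¬ p ⟨j, by omega⟩ < p ⟨j + 1, h⟩ := by
    rw [hp j h]; omega
  rcases lt_trichotomy (p ⟨j + 1, h⟩) (p ⟨j, by omega⟩) with h' | h' | h'
  · exact h'
  · have := hpi h'
    rw [Fin.ext_iff] at this; simp at this
  · exact absurd h' h1

lemma noEvenIns_T (hn : Even n) (hp : Alternating p) (hT : ¬ BadT k p) :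
    ∀ j : Fin n, j.1 % 2 = 0 → ¬ Ins k p j := by
  rintro j hj ⟨e, he, hej, hev⟩
  obtain ⟨m, hm⟩ := hn
  have hj2 : j.1 < n := j.2
  have hj1 : j.1 + 1 < n := by omega
  have step : p j < p ⟨j.1 + 1, hj1⟩ := alt_lt hp hj1 hj
  refine hT ⟨e, j, ⟨j.1 + 1, hj1⟩, he, hej, ?_, hev, step⟩
  exact Fin.lt_def.2 (by simp)

lemma noEvenIns_S (hp : Alternating p) (hpi : Injective p) (hS : ¬ BadS k p) :
    ∀ j : Fin n, j.1 % 2 = 0 → ¬ Ins k p j := by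
  rintro j hj ⟨e, he, hej, hev⟩
  have he1 : e.1 < j.1 := hej
  have hj2 := j.2
  have hi1 : (j.1 - 1) + 1 < n := by omega
  have step : p ⟨j.1 - 1 + 1, hi1⟩ < p ⟨j.1 - 1, by omega⟩ :=
    alt_gt hp hpi hi1 (by omega)
  have hjj : (⟨j.1 - 1 + 1, hi1⟩ : Fin n) = j := by ext; simp; omega
  rw [hjj] at step
  have hei : e.1 < j.1 - 1 := by
    rcases Nat.lt_or_ge e.1 (j.1 - 1) with h' | h'
    · exact h'
    · exfalso
      have hee : e.1 = j.1 - 1 := by omega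
      have heq : e = ⟨j.1 - 1, by omega⟩ := Fin.ext hee
      rw [heq] at hev
      exact lt_asymm hev step
  refine hS ⟨e, ⟨j.1 - 1, by omega⟩, j, he, Fin.lt_def.2 (by simpa using hei), ?_, hev, step⟩
  exact Fin.lt_def.2 (by simp; omega)

/-- R1: seed transfer for outside points. -/
lemma seed_transfer (hR : Rearr k p q) {e : Fin n} (he : ¬ Ins k p e) :
    Seed k p e ↔ Seed k q e := by
  have hqe : q e = p e := hR.1 e he
  constructor
  · rintro ⟨g, hg, hge⟩
    have hout : ∀ i, ¬ Ins k p (g i) := by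
      intro i hIi
      exact he (ins_closure hIi (hge i).1 (hge i).2)
    refine ⟨g, ?_, ?_⟩
    · intro i j hij
      rw [hR.1 _ (hout i), hR.1 _ (hout j)]
      exact hg i j hij
    · intro i
      rw [hR.1 _ (hout i), hqe]
      exact hge i
  · rintro ⟨g, hg, hge⟩
    have hout : ∀ i, ¬ Ins k p (g i) := by
      intro i hIi
      obtain ⟨s, hs1, hs2, hs3, hs4⟩ := hR.2 _ hIi
      exact he ⟨s, hs2, lt_trans hs3 (hge i).1, by rw [← hqe]; exact lt_trans hs4 (hge i).2⟩
    refine ⟨g, ?_, ?_⟩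
    · intro i j hij
      have := hg i j hij
      rwa [hR.1 _ (hout i), hR.1 _ (hout j)] at this
    · intro i
      have := hge i
      rwa [hR.1 _ (hout i), hqe] at this

/-- R2: the inside set is preserved by admissible rearrangement. -/
lemma ins_transfer (hR : Rearr k p q) (j : Fin n) : Ins k q j ↔ Ins k p j := by
  constructor
  · rintro ⟨e, he, hej, hev⟩
    by_contra hIj
    have hqj : q j = p j := hR.1 j hIj
    by_cases hIe : Ins k p e
    · obtain ⟨s, hs1, hs2, hs3, hs4⟩ := hR.2 _ hIe
      exact hIj ⟨s, hs2, lt_trans hs3 hej, by rw [← hqj]; exact lt_trans hs4 hev⟩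
    · have hqe : q e = p e := hR.1 e hIe
      exact hIj ⟨e, (seed_transfer hR hIe).2 he, hej, by rw [← hqe, ← hqj]; exact hev⟩
  · rintro hIj
    obtain ⟨s, hs1, hs2, hs3, hs4⟩ := hR.2 _ hIj
    exact ⟨s, (seed_transfer hR hs1).1 hs2, hs3, by rw [hR.1 s hs1]; exact hs4⟩

/-- R3: admissible rearrangements stay alternating (when no even position is inside). -/
lemma alt_transfer (hp : Alternating p) (hpi : Injective p)
    (hpe : ∀ j : Fin n, j.1 % 2 = 0 → ¬ Ins k p j) (hR : Rearr k p q) :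
    Alternating q := by
  intro i hi1
  set a : Fin n := ⟨i, by omega⟩ with ha
  set b : Fin n := ⟨i + 1, hi1⟩ with hb
  rcases Nat.even_or_odd i with hev | hod
  · -- ascent required
    have hie : i % 2 = 0 := Nat.even_iff.1 hev
    have hIa : ¬ Ins k p a := hpe a hie
    have hqa : q a = p a := hR.1 a hIa
    have : q a < q b := by
      by_cases hIb : Ins k p b
      · obtain ⟨s, hs1, hs2, hs3, hs4⟩ := hR.2 b hIb
        rcases lt_or_eq_of_le (Nat.lt_succ_iff.1 (show s.1 < i + 1 from hs3)) with hsa | hsa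
        · -- s < a, s is a seed, a outside: p a < p s
          have hps : p a < p s := by
            rcases lt_trichotomy (p a) (p s) with h' | h' | h'
            · exact h'
            · exfalso
              have hsv : s.1 = a.1 := congrArg Fin.val (hpi h'.symm)
              have hai : a.1 = i := rfl
              have hsi : s.1 < i := hsa
              omega
            · exact absurd ⟨s, hs2, Fin.lt_def.2 (by simpa [ha] using hsa), h'⟩ hIa
          rw [hqa]; exact lt_trans hps hs4
        · have hsa' : s = a := Fin.ext (by simpa [ha] using hsa)
          rw [hqa, ← hsa']; exact hs4
      · rw [hqa, hR.1 b hIb]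
        exact alt_lt hp hi1 hie
    simpa [hie] using this
  · -- descent required
    have hio : i % 2 = 1 := Nat.odd_iff.1 hod
    have hIb : ¬ Ins k p b := hpe b (by simp [hb]; omega)
    have hqb : q b = p b := hR.1 b hIb
    have : q b < q a := by
      by_cases hIa : Ins k p a
      · obtain ⟨s, hs1, hs2, hs3, hs4⟩ := hR.2 a hIa
        have hsb : s < b := lt_trans hs3 (Fin.lt_def.2 (by simp [ha, hb]))
        have hps : p b < p s := by
          rcases lt_trichotomy (p b) (p s) with h' | h' | h'
          · exact h'
          · exfalso
            have hsv : s.1 = b.1 := congrArg Fin.val (hpi h'.symm)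
            have hbi : b.1 = i + 1 := rfl
            have hsi : s.1 < a.1 := hs3
            have hai : a.1 = i := rfl
            omega
          · exact absurd ⟨s, hs2, hsb, h'⟩ hIb
        rw [hqb]; exact lt_trans hps hs4
      · rw [hqb, hR.1 a hIa]
        exact alt_gt hp hpi hi1 hio
    have hnlt : ¬ q a < q b := lt_asymm this
    simpa [hio] using hnlt


variable {k : ℕ} {p q : Fin n → Fin n}

section Build
variable (g : Fin (k - 3) → Fin n) (e a b : Fin n)

def bld : Fin k → Fin n := fun i =>
  if h3 : i.1 < k - 3 then g ⟨i.1, h3⟩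
  else if i.1 = k - 3 then e else if i.1 = k - 2 then a else b

lemma bld_cases (hk : 3 ≤ k) (i : Fin k) :
    (∃ h : i.1 < k - 3, bld g e a b i = g ⟨i.1, h⟩) ∨
    (bld g e a b i = e ∧ i.1 = k - 3) ∨
    (bld g e a b i = a ∧ i.1 = k - 2) ∨
    (bld g e a b i = b ∧ i.1 = k - 1) := by
  unfold bld
  split_ifs with h1 h2 h3
  · exact Or.inl ⟨h1, rfl⟩
  · exact Or.inr (Or.inl ⟨rfl, h2⟩)
  · exact Or.inr (Or.inr (Or.inl ⟨rfl, h3⟩))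
  · exact Or.inr (Or.inr (Or.inr ⟨rfl, by have := i.2; omega⟩))

lemma bld_strictMono (hk : 3 ≤ k)
    (hgm : ∀ i j, i < j → g i < g j) (hge : ∀ i, g i < e)
    (hea : e < a) (hab : a < b) : StrictMono (bld g e a b) := by
  intro x y hxy
  have hxy' : x.1 < y.1 := hxy
  rcases bld_cases g e a b hk x with ⟨hx, hex⟩ | ⟨hex, hx3⟩ | ⟨hex, hx3⟩ | ⟨hex, hx3⟩ <;>
    rcases bld_cases g e a b hk y with ⟨hy, hey⟩ | ⟨hey, hy3⟩ | ⟨hey, hy3⟩ | ⟨hey, hy3⟩ <;>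
    rw [hex, hey] <;>
    first
      | exact hgm _ _ (Fin.mk_lt_mk.2 hxy')
      | exact hge _
      | exact lt_trans (hge _) hea
      | exact lt_trans (lt_trans (hge _) hea) hab
      | exact hea
      | exact lt_trans hea hab
      | exact hab
      | exact absurd hxy' (by omega)

lemma bld_valT (hk : 3 ≤ k)
    (hgm : ∀ i j, i < j → p (g i) < p (g j)) (hge : ∀ i, p (g i) < p e)
    (hea : p e < p a) (hab : p a < p b) :
    ∀ x y : Fin k, x < y → p (bld g e a b x) < p (bld g e a b y) := by
  intro x y hxy
  have hxy' : x.1 < y.1 := hxy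
  rcases bld_cases g e a b hk x with ⟨hx, hex⟩ | ⟨hex, hx3⟩ | ⟨hex, hx3⟩ | ⟨hex, hx3⟩ <;>
    rcases bld_cases g e a b hk y with ⟨hy, hey⟩ | ⟨hey, hy3⟩ | ⟨hey, hy3⟩ | ⟨hey, hy3⟩ <;>
    rw [hex, hey] <;>
    first
      | exact hgm _ _ (Fin.mk_lt_mk.2 hxy')
      | exact hge _
      | exact lt_trans (hge _) hea
      | exact lt_trans (lt_trans (hge _) hea) hab
      | exact hea
      | exact lt_trans hea hab
      | exact hab
      | exact absurd hxy' (by omega)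

end Build

lemma contains_id_iff (hk : 3 ≤ k) :
    Contains p (id : Fin k → Fin k) ↔ BadT k p := by
  constructor
  · rintro ⟨f, hf, hiff⟩
    have hmono : ∀ i j : Fin k, i < j → p (f i) < p (f j) := by
      intro i j hij
      exact (hiff i j).1 (by simpa using hij)
    refine ⟨f ⟨k-3, by omega⟩, f ⟨k-2, by omega⟩, f ⟨k-1, by omega⟩,
      ⟨fun i => f ⟨i.1, by omega⟩, ?_, ?_⟩, ?_, ?_, ?_, ?_⟩
    · intro i j hij
      exact ⟨hf (Fin.mk_lt_mk.2 hij), hmono _ _ (Fin.mk_lt_mk.2 hij)⟩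
    · intro i
      have h : (⟨i.1, by omega⟩ : Fin k) < ⟨k-3, by omega⟩ := Fin.mk_lt_mk.2 (i.2)
      exact ⟨hf h, hmono _ _ h⟩
    · exact hf (Fin.mk_lt_mk.2 (by omega))
    · exact hf (Fin.mk_lt_mk.2 (by omega))
    · exact hmono _ _ (Fin.mk_lt_mk.2 (by omega))
    · exact hmono _ _ (Fin.mk_lt_mk.2 (by omega))
  · rintro ⟨e, a, b, ⟨g, hg, hge⟩, hea, hab, hvea, hvab⟩
    refine ⟨bld g e a b, bld_strictMono g e a b hk (fun i j h => (hg i j h).1)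
      (fun i => (hge i).1) hea hab, ?_⟩
    have V := bld_valT g e a b hk (fun i j h => (hg i j h).2) (fun i => (hge i).2) hvea hvab
    intro x y
    constructor
    · intro h; exact V x y (by simpa using h)
    · intro h
      rcases lt_trichotomy x y with h' | h' | h'
      · simpa using h'
      · subst h'; exact absurd h (lt_irrefl _)
      · exact absurd (V y x h') (lt_asymm h)

def U (k : ℕ) : Fin k → ℕ := fun x => if x.1 = k-2 then k-1 else if x.1 = k-1 then k-2 else x.1

lemma swap_lt_iff_U (hk : 3 ≤ k) (x y : Fin k) :
    (Equiv.swap (⟨k-2, by omega⟩ : Fin k) ⟨k-1, by omega⟩) x <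
      (Equiv.swap (⟨k-2, by omega⟩ : Fin k) ⟨k-1, by omega⟩) y ↔ U k x < U k y := by
  have hval : ∀ z : Fin k,
      ((Equiv.swap (⟨k-2, by omega⟩ : Fin k) ⟨k-1, by omega⟩) z).1 = U k z := by
    intro z
    unfold U
    split_ifs with h1 h2
    · have : z = ⟨k-2, by omega⟩ := by ext; exact h1
      rw [this, Equiv.swap_apply_left]
    · have : z = ⟨k-1, by omega⟩ := by ext; exact h2
      rw [this, Equiv.swap_apply_right]
    · rw [Equiv.swap_apply_of_ne_of_ne]
      · intro h; rw [Fin.ext_iff] at h; simp at h; omega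
      · intro h; rw [Fin.ext_iff] at h; simp at h; omega
  rw [Fin.lt_def, hval, hval]

lemma U_inj (hk : 3 ≤ k) {x y : Fin k} (h : U k x = U k y) : x = y := by
  have hx := x.2; have hy := y.2
  unfold U at h
  split_ifs at h <;> (ext; omega)

lemma contains_swap_iff (hk : 3 ≤ k) :
    Contains p ⇑(Equiv.swap (⟨k-2, by omega⟩ : Fin k) ⟨k-1, by omega⟩) ↔ BadS k p := by
  constructor
  · rintro ⟨f, hf, hiff⟩
    have hiff' : ∀ x y : Fin k, U k x < U k y ↔ p (f x) < p (f y) :=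
      fun x y => (swap_lt_iff_U hk x y).symm.trans (hiff x y)
    refine ⟨f ⟨k-3, by omega⟩, f ⟨k-2, by omega⟩, f ⟨k-1, by omega⟩,
      ⟨fun i => f ⟨i.1, by omega⟩, ?_, ?_⟩, ?_, ?_, ?_, ?_⟩
    · intro i j hij
      have hj := j.2
      refine ⟨hf (Fin.mk_lt_mk.2 hij), (hiff' _ _).1 ?_⟩
      unfold U; split_ifs <;> simp_all <;> omega
    · intro i
      have hi := i.2
      refine ⟨hf (Fin.mk_lt_mk.2 hi), (hiff' _ _).1 ?_⟩
      unfold U; split_ifs <;> simp_all <;> omega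
    · exact hf (Fin.mk_lt_mk.2 (by omega))
    · exact hf (Fin.mk_lt_mk.2 (by omega))
    · refine (hiff' _ _).1 ?_
      unfold U; split_ifs <;> simp_all <;> omega
    · refine (hiff' _ _).1 ?_
      unfold U; split_ifs <;> simp_all <;> omega
  · rintro ⟨e, a, b, ⟨g, hg, hge⟩, hea, hab, hveb, hvba⟩
    have hsm : StrictMono (bld g e a b) := by
      intro x y hxy
      have hxy' : x.1 < y.1 := hxy
      rcases bld_cases g e a b hk x with ⟨hx, hex⟩ | ⟨hex, hx3⟩ | ⟨hex, hx3⟩ | ⟨hex, hx3⟩ <;>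
        rcases bld_cases g e a b hk y with ⟨hy, hey⟩ | ⟨hey, hy3⟩ | ⟨hey, hy3⟩ | ⟨hey, hy3⟩ <;>
        rw [hex, hey] <;>
        first
          | exact (hg _ _ (Fin.mk_lt_mk.2 hxy')).1
          | exact (hge _).1
          | exact lt_trans (hge _).1 hea
          | exact lt_trans (lt_trans (hge _).1 hea) hab
          | exact hea
          | exact lt_trans hea hab
          | exact hab
          | exact absurd hxy' (by omega)
    have VAL : ∀ x y : Fin k, U k x < U k y → p (bld g e a b x) < p (bld g e a b y) := by
      intro x y h
      rcases bld_cases g e a b hk x with ⟨hx, hex⟩ | ⟨hex, hx3⟩ | ⟨hex, hx3⟩ | ⟨hex, hx3⟩ <;>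
        rcases bld_cases g e a b hk y with ⟨hy, hey⟩ | ⟨hey, hy3⟩ | ⟨hey, hy3⟩ | ⟨hey, hy3⟩ <;>
        rw [hex, hey] <;>
        [skip; skip; skip; skip; skip; skip; skip; skip; skip; skip; skip; skip;
         skip; skip; skip; skip] <;>
        first
          | (exfalso; unfold U at h; split_ifs at h <;> omega)
          | exact (hg ⟨x.1, hx⟩ ⟨y.1, hy⟩ (Fin.mk_lt_mk.2 (by
              unfold U at h; split_ifs at h <;> omega))).2
          | exact (hge _).2
          | exact lt_trans (hge _).2 (lt_trans hveb hvba)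
          | exact lt_trans (hge _).2 hveb
          | exact lt_trans hveb hvba
          | exact hveb
          | exact hvba
    refine ⟨bld g e a b, hsm, ?_⟩
    intro x y
    rw [swap_lt_iff_U hk x y]
    constructor
    · exact VAL x y
    · intro h
      rcases lt_trichotomy (U k x) (U k y) with h' | h' | h'
      · exact h'
      · exact absurd h (by rw [U_inj hk h']; exact lt_irrefl _)
      · exact absurd (VAL y x h') (lt_asymm h)

noncomputable section

variable (M : Finset (Fin n)) (q : Fin n → Fin n)

def valF : Finset (Fin n) := M.image q

lemma valF_card (hq : Injective q) : (valF M q).card = M.card := by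
  rw [valF, Finset.card_image_of_injective _ hq]

def psiAux (hq : Injective q) : Fin n → Fin n := fun j =>
  if h : j ∈ M then
    (valF M q).orderEmbOfFin (valF_card M q hq)
      (Fin.rev ((M.orderIsoOfFin rfl).symm ⟨j, h⟩))
  else q j

variable (hq : Injective q)

lemma psiAux_out {j : Fin n} (h : j ∉ M) : psiAux M q hq j = q j := dif_neg h

lemma psiAux_in {j : Fin n} (h : j ∈ M) :
    psiAux M q hq j = (valF M q).orderEmbOfFin (valF_card M q hq)
      (Fin.rev ((M.orderIsoOfFin rfl).symm ⟨j, h⟩)) := dif_pos h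

lemma psiAux_mem {j : Fin n} (h : j ∈ M) : psiAux M q hq j ∈ valF M q := by
  rw [psiAux_in M q hq h]
  exact Finset.orderEmbOfFin_mem _ _ _

lemma psiAux_anti {a b : Fin n} (ha : a ∈ M) (hb : b ∈ M) (hab : a < b) :
    psiAux M q hq b < psiAux M q hq a := by
  rw [psiAux_in M q hq ha, psiAux_in M q hq hb]
  apply ((valF M q).orderEmbOfFin (valF_card M q hq)).strictMono
  rw [Fin.rev_lt_rev]
  exact (OrderIso.lt_iff_lt _).2 (Subtype.mk_lt_mk.2 hab)

lemma psiAux_inj : Injective (psiAux M q hq) := by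
  intro x y hxy
  by_cases hx : x ∈ M <;> by_cases hy : y ∈ M
  · rw [psiAux_in M q hq hx, psiAux_in M q hq hy] at hxy
    have h1 := ((valF M q).orderEmbOfFin (valF_card M q hq)).injective hxy
    have h2 := Fin.rev_injective h1
    have h3 := (M.orderIsoOfFin rfl).symm.injective h2
    exact congrArg Subtype.val h3
  · exfalso
    have h1 : psiAux M q hq x ∈ valF M q := psiAux_mem M q hq hx
    rw [hxy, psiAux_out M q hq hy] at h1
    obtain ⟨z, hz, hzq⟩ := Finset.mem_image.1 h1
    exact hy (by rwa [hq hzq] at hz)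
  · exfalso
    have h1 : psiAux M q hq y ∈ valF M q := psiAux_mem M q hq hy
    rw [← hxy, psiAux_out M q hq hx] at h1
    obtain ⟨z, hz, hzq⟩ := Finset.mem_image.1 h1
    exact hx (by rwa [hq hzq] at hz)
  · rw [psiAux_out M q hq hx, psiAux_out M q hq hy] at hxy
    exact hq hxy

lemma psiAux_surj {v : Fin n} (hv : v ∈ valF M q) :
    ∃ j, ∃ h : j ∈ M, psiAux M q hq j = v := by
  have : v ∈ Set.range ((valF M q).orderEmbOfFin (valF_card M q hq)) := by
    rw [Finset.range_orderEmbOfFin]; exact hv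
  obtain ⟨i, hi⟩ := this
  refine ⟨((M.orderIsoOfFin rfl) (Fin.rev i) : Fin n),
    ((M.orderIsoOfFin rfl) (Fin.rev i)).2, ?_⟩
  rw [psiAux_in M q hq ((M.orderIsoOfFin rfl) (Fin.rev i)).2]
  have h1 : ((M.orderIsoOfFin rfl).symm ⟨((M.orderIsoOfFin rfl) (Fin.rev i) : Fin n),
      ((M.orderIsoOfFin rfl) (Fin.rev i)).2⟩) = Fin.rev i := by
    rw [show (⟨((M.orderIsoOfFin rfl) (Fin.rev i) : Fin n),
      ((M.orderIsoOfFin rfl) (Fin.rev i)).2⟩ : {x // x ∈ M}) =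
        (M.orderIsoOfFin rfl) (Fin.rev i) from rfl]
    exact OrderIso.symm_apply_apply _ _
  rw [h1, Fin.rev_rev]
  exact hi

/-- key counting lemma: the value at `j` dominates some original value at `l ≤ j`. -/
lemma psiAux_dom {j : Fin n} (h : j ∈ M) :
    ∃ l ∈ M, l ≤ j ∧ q l ≤ psiAux M q hq j := by
  by_contra hcon
  push_neg at hcon
  set A1 : Finset (Fin n) := M.filter (fun l => l ≤ j) with hA1
  set B1 : Finset (Fin n) := (valF M q).filter (fun v => psiAux M q hq j ≤ v) with hB1
  have hcards : A1.card = B1.card := by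
    apply Finset.card_bij (fun l _ => psiAux M q hq l)
    · intro l hl
      rw [hA1, Finset.mem_filter] at hl
      rw [hB1, Finset.mem_filter]
      refine ⟨psiAux_mem M q hq hl.1, ?_⟩
      rcases lt_or_eq_of_le hl.2 with h' | h'
      · exact le_of_lt (psiAux_anti M q hq hl.1 h h')
      · rw [h']
    · intro x hx y hy hxy
      exact psiAux_inj M q hq hxy
    · intro v hv
      rw [hB1, Finset.mem_filter] at hv
      obtain ⟨l, hl, hlv⟩ := psiAux_surj M q hq hv.1
      refine ⟨l, ?_, hlv⟩
      rw [hA1, Finset.mem_filter]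
      refine ⟨hl, ?_⟩
      by_contra hlj
      push_neg at hlj
      have := psiAux_anti M q hq h hl hlj
      rw [hlv] at this
      exact absurd (lt_of_le_of_lt hv.2 this) (lt_irrefl _)
  have hsub : A1.image q ⊆ B1.erase (psiAux M q hq j) := by
    intro v hv
    obtain ⟨l, hl, hlv⟩ := Finset.mem_image.1 hv
    rw [hA1, Finset.mem_filter] at hl
    have hlt : psiAux M q hq j < q l := hcon l hl.1 hl.2
    rw [Finset.mem_erase]
    constructor
    · rw [← hlv]; exact fun hh => absurd (hh ▸ hlt) (lt_irrefl _)
    · rw [hB1, Finset.mem_filter]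
      exact ⟨by rw [← hlv, valF]; exact Finset.mem_image_of_mem q hl.1,
        by rw [← hlv]; exact le_of_lt hlt⟩
  have h1 : (A1.image q).card = A1.card := Finset.card_image_of_injective _ hq
  have h2 : (B1.erase (psiAux M q hq j)).card = B1.card - 1 := by
    apply Finset.card_erase_of_mem
    rw [hB1, Finset.mem_filter]
    exact ⟨psiAux_mem M q hq h, le_refl _⟩
  have h3 : A1.Nonempty := ⟨j, by rw [hA1, Finset.mem_filter]; exact ⟨h, le_refl j⟩⟩
  have h4 := Finset.card_le_card hsub
  have h5 := Finset.card_pos.2 h3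
  omega

/-- uniqueness of the antitone arrangement. -/
lemma anti_unique (f : Fin n → Fin n)
    (hmapsto : ∀ j ∈ M, f j ∈ valF M q)
    (hanti : ∀ a ∈ M, ∀ b ∈ M, a < b → f b < f a) :
    ∀ j, ∀ h : j ∈ M, f j = psiAux M q hq j := by
  have hcard := valF_card M q hq
  set F : Fin M.card → Fin n := fun i => f (M.orderEmbOfFin rfl (Fin.rev i)) with hF
  have hFmono : StrictMono F := by
    intro i i' hii
    show f _ < f _
    exact hanti _ (Finset.orderEmbOfFin_mem _ _ _) _ (Finset.orderEmbOfFin_mem _ _ _)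
      ((M.orderEmbOfFin rfl).strictMono (Fin.rev_lt_rev.2 hii))
  have hFmem : ∀ i, F i ∈ valF M q := fun i =>
    hmapsto _ (Finset.orderEmbOfFin_mem _ _ _)
  have hFeq : F = ⇑((valF M q).orderEmbOfFin hcard) :=
    Finset.orderEmbOfFin_unique hcard hFmem hFmono
  intro j h
  rw [psiAux_in M q hq h]
  set i0 := (M.orderIsoOfFin rfl).symm ⟨j, h⟩ with hi0
  have hj : M.orderEmbOfFin rfl i0 = j := by
    rw [← Finset.coe_orderIsoOfFin_apply, hi0, OrderIso.apply_symm_apply]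
  have h1 : F (Fin.rev i0) = f j := by
    show f (M.orderEmbOfFin rfl (Fin.rev (Fin.rev i0))) = f j
    rw [Fin.rev_rev, hj]
  have h2 : F (Fin.rev i0) = (valF M q).orderEmbOfFin hcard (Fin.rev i0) := by
    rw [hFeq]
  have h3 : ((valF M q).orderEmbOfFin hcard) (Fin.rev i0) =
      ((valF M q).orderEmbOfFin (valF_card M q hq)) (Fin.rev i0) := rfl
  rw [← h1, h2, h3]

end

open scoped Classical in
noncomputable def insF (k : ℕ) (q : Fin n → Fin n) : Finset (Fin n) :=
  Finset.univ.filter (fun j => Ins k q j)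

lemma mem_insF {k : ℕ} {q : Fin n → Fin n} {j : Fin n} :
    j ∈ insF k q ↔ Ins k q j := by
  classical
  simp [insF]

noncomputable def psi (k : ℕ) (q : Fin n → Fin n) (hq : Injective q) : Fin n → Fin n :=
  psiAux (insF k q) q hq

lemma rearr_psi (hq : Injective q) : Rearr k q (psi k q hq) := by
  constructor
  · intro j hj
    exact psiAux_out _ _ _ (fun hh => hj (mem_insF.1 hh))
  · intro j hj
    obtain ⟨l, hl, hlj, hlv⟩ := psiAux_dom (insF k q) q hq (mem_insF.2 hj)
    obtain ⟨s, hs1, hs2, hs3, hs4⟩ := inner2outer l (mem_insF.1 hl)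
    exact ⟨s, hs1, hs2, lt_of_lt_of_le hs3 hlj, lt_of_lt_of_le hs4 hlv⟩

/-- images over the inside set agree for bijections agreeing outside. -/
lemma image_inside_eq {M : Finset (Fin n)} {f g : Fin n → Fin n}
    (hf : Bijective f) (hg : Bijective g) (hout : ∀ j, j ∉ M → f j = g j) :
    M.image f = M.image g := by
  have key : ∀ (f g : Fin n → Fin n), Bijective f → Bijective g →
      (∀ j, j ∉ M → f j = g j) → M.image f ⊆ M.image g := by
    intro f g hf hg hout v hv
    obtain ⟨x, hx, hxv⟩ := Finset.mem_image.1 hv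
    obtain ⟨y, hy⟩ := hg.2 v
    have hyM : y ∈ M := by
      by_contra hyM
      have : f y = f x := by rw [hxv, ← hy, hout y hyM]
      exact hyM (hf.1 this ▸ hx)
    exact Finset.mem_image.2 ⟨y, hyM, hy⟩
  exact le_antisymm (key f g hf hg hout)
    (key g f hg hf (fun j hj => (hout j hj).symm))

/-- well-definedness: `psi` maps σ-avoiders to 12⋯k-avoiders. -/
lemma psi_maps (hk : 3 ≤ k) (hqb : Bijective q) (hqa : Alternating q)
    (hS : ¬ BadS k q) :
    Bijective (psi k q hqb.1) ∧ Alternating (psi k q hqb.1) ∧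
      ¬ BadT k (psi k q hqb.1) := by
  have hR : Rearr k q (psi k q hqb.1) := rearr_psi hqb.1
  have hinj : Injective (psi k q hqb.1) := psiAux_inj _ _ _
  refine ⟨Finite.injective_iff_bijective.1 hinj, ?_, ?_⟩
  · exact alt_transfer hqa hqb.1 (noEvenIns_S hqa hqb.1 hS) hR
  · rw [badT_iff_dec hinj]
    intro a b hIa hIb hab
    have haM : a ∈ insF k q := mem_insF.2 ((ins_transfer hR a).1 hIa)
    have hbM : b ∈ insF k q := mem_insF.2 ((ins_transfer hR b).1 hIb)
    exact psiAux_anti _ _ _ haM hbM hab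

/-- injectivity of `psi` on σ-avoiders. -/
lemma psi_inj_on (hk : 3 ≤ k) {q1 q2 : Fin n → Fin n}
    (hb1 : Bijective q1) (hb2 : Bijective q2)
    (hS1 : ¬ BadS k q1) (hS2 : ¬ BadS k q2)
    (heq : psi k q1 hb1.1 = psi k q2 hb2.1) : q1 = q2 := by
  set P := psi k q1 hb1.1 with hP
  have hR1 : Rearr k q1 P := rearr_psi hb1.1
  have hR2 : Rearr k q2 P := heq ▸ rearr_psi hb2.1
  have hIeq : ∀ j, Ins k q1 j ↔ Ins k q2 j := by
    intro j
    rw [← ins_transfer hR1 j, ins_transfer hR2 j]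
  have haux : ∀ (r1 r2 : Fin n → Fin n) (hbr1 : Bijective r1) (hbr2 : Bijective r2),
      ¬ BadS k r1 → Rearr k r1 P → Rearr k r2 P →
      ∀ j : Fin n, (∀ l : Fin n, l < j → r1 l = r2 l) → Ins k r1 j →
      ¬ (r2 j < r1 j) := by
    intro r1 r2 hbr1 hbr2 hSr1 hRr1 hRr2 j hIH hIj hlt
    obtain ⟨b, hb⟩ := hbr1.2 (r2 j)
    have hbj : j < b := by
      rcases lt_trichotomy b j with h' | h' | h'
      · exact absurd (hbr2.1 ((hIH b h').symm.trans hb)) (by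
          intro hh; subst hh; exact lt_irrefl _ h')
      · exfalso; subst h'; rw [hb] at hlt; exact lt_irrefl _ hlt
      · exact h'
    have hIj2 : Ins k r2 j := by
      rw [← ins_transfer hRr2 j, ins_transfer hRr1 j]; exact hIj
    obtain ⟨s, hs1, hs2, hs3, hs4⟩ := inner2outer j hIj2
    have hs1' : ¬ Ins k r1 s := by
      rw [← ins_transfer hRr1 s, ins_transfer hRr2 s]; exact hs1
    have hvs : r1 s = r2 s := by
      rw [← hRr1.1 s hs1', hRr2.1 s hs1]
    have hseed : Seed k r1 s :=
      (seed_transfer hRr1 hs1').mpr ((seed_transfer hRr2 hs1).mp hs2)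
    have hsig := (badS_iff_sig hbr1.1).1 hSr1 j b hIj hbj
      ⟨s, hseed, hs3, by rw [hvs, hb]; exact hs4⟩
    rw [hb] at hsig
    exact lt_asymm hlt hsig
  funext j
  have H : ∀ m : ℕ, ∀ j : Fin n, j.1 = m → q1 j = q2 j := by
    intro m
    induction m using Nat.strong_induction_on with
    | _ m ih =>
      intro j hjm
      have hIH : ∀ l : Fin n, l < j → q1 l = q2 l := by
        intro l hl
        exact ih l.1 (by have : l.1 < j.1 := hl; omega) l rfl
      by_cases hIj : Ins k q1 j
      · rcases lt_trichotomy (q1 j) (q2 j) with h' | h' | h'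
        · exact absurd h' (haux q2 q1 hb2 hb1 hS2 hR2 hR1 j
            (fun l hl => (hIH l hl).symm) ((hIeq j).1 hIj))
        · exact h'
        · exact absurd h' (haux q1 q2 hb1 hb2 hS1 hR1 hR2 j hIH hIj)
      · rw [← hR1.1 j hIj, hR2.1 j (fun hh => hIj ((hIeq j).2 hh))]
  exact H j.1 j rfl

lemma psi_surj_on (hk : 3 ≤ k) (hn : Even n) {p : Fin n → Fin n}
    (hpb : Bijective p) (hpa : Alternating p) (hT : ¬ BadT k p) :
    ∃ q : Fin n → Fin n, ∃ hq : Bijective q, Alternating q ∧ ¬ BadS k q ∧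
      psi k q hq.1 = p := by
  classical
  set RS : Finset (Fin n → Fin n) :=
    Finset.univ.filter (fun q => Bijective q ∧ Rearr k p q) with hRS
  have hpRS : p ∈ RS := by
    rw [hRS, Finset.mem_filter]
    exact ⟨Finset.mem_univ _, hpb, fun j _ => rfl, fun j hj => inner2outer j hj⟩
  obtain ⟨q0, hq0RS, hmax⟩ :=
    RS.exists_max_image (fun q => ∑ j ∈ insF k p, j.1 * (q j).1) ⟨p, hpRS⟩
  rw [hRS, Finset.mem_filter] at hq0RS
  obtain ⟨-, hq0b, hq0R⟩ := hq0RS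
  have hS0 : ¬ BadS k q0 := by
    rintro ⟨e, a, b, he, hea, hab, hveb, hvba⟩
    have hIa : Ins k q0 a := ⟨e, he, hea, lt_trans hveb hvba⟩
    have hIb : Ins k q0 b := ⟨e, he, lt_trans hea hab, hveb⟩
    have hIpa : Ins k p a := (ins_transfer hq0R a).1 hIa
    have hIpb : Ins k p b := (ins_transfer hq0R b).1 hIb
    have hws : ∃ s, ¬ Ins k p s ∧ Seed k p s ∧ s < a ∧ p s < q0 b := by
      by_cases hIe : Ins k p e
      · obtain ⟨s, hs1, hs2, hs3, hs4⟩ := hq0R.2 e hIe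
        exact ⟨s, hs1, hs2, lt_trans hs3 hea, lt_trans hs4 hveb⟩
      · refine ⟨e, hIe, (seed_transfer hq0R hIe).mpr he, hea, ?_⟩
        rw [← hq0R.1 e hIe]; exact hveb
    obtain ⟨s, hs1, hs2, hs3, hs4⟩ := hws
    set q1 : Fin n → Fin n := q0 ∘ (Equiv.swap a b) with hq1
    have hq1a : q1 a = q0 b := by rw [hq1]; simp
    have hq1b : q1 b = q0 a := by rw [hq1]; simp
    have hq1o : ∀ j, j ≠ a → j ≠ b → q1 j = q0 j := by
      intro j h1 h2; rw [hq1]; simp [Equiv.swap_apply_of_ne_of_ne h1 h2]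
    have hq1RS : q1 ∈ RS := by
      rw [hRS, Finset.mem_filter]
      refine ⟨Finset.mem_univ _, hq0b.comp (Equiv.bijective _), ?_, ?_⟩
      · intro j hj
        rw [hq1o j (fun hh => hj (hh ▸ hIpa)) (fun hh => hj (hh ▸ hIpb))]
        exact hq0R.1 j hj
      · intro j hj
        by_cases hja : j = a
        · subst hja; rw [hq1a]; exact ⟨s, hs1, hs2, hs3, hs4⟩
        · by_cases hjb : j = b
          · subst hjb; rw [hq1b]
            exact ⟨s, hs1, hs2, lt_trans hs3 hab, lt_trans hs4 hvba⟩
          · rw [hq1o j hja hjb]; exact hq0R.2 j hj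
    have haM : a ∈ insF k p := mem_insF.2 hIpa
    have hbM' : b ∈ (insF k p).erase a := Finset.mem_erase.2 ⟨ne_of_gt hab, mem_insF.2 hIpb⟩
    have key : ∀ r : Fin n → Fin n, (∑ j ∈ insF k p, j.1 * (r j).1) =
        a.1 * (r a).1 + (b.1 * (r b).1 +
          ∑ j ∈ ((insF k p).erase a).erase b, j.1 * (r j).1) := by
      intro r
      rw [Finset.add_sum_erase ((insF k p).erase a) (fun j => j.1 * (r j).1) hbM',
        Finset.add_sum_erase (insF k p) (fun j => j.1 * (r j).1) haM]
    have hrest : (∑ j ∈ ((insF k p).erase a).erase b, j.1 * (q1 j).1)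
        = ∑ j ∈ ((insF k p).erase a).erase b, j.1 * (q0 j).1 := by
      apply Finset.sum_congr rfl
      intro j hj
      rw [Finset.mem_erase, Finset.mem_erase] at hj
      rw [hq1o j hj.2.1 hj.1]
    have hsum : (∑ j ∈ insF k p, j.1 * (q0 j).1) < ∑ j ∈ insF k p, j.1 * (q1 j).1 := by
      rw [key q0, key q1, hq1a, hq1b, hrest]
      have h1 : a.1 < b.1 := hab
      have h2 : (q0 b).1 < (q0 a).1 := hvba
      nlinarith [h1, h2]
    exact absurd (hmax q1 hq1RS) (not_le.2 hsum)
  have halt : Alternating q0 := alt_transfer hpa hpb.1 (noEvenIns_T hn hpa hT) hq0R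
  have hMeq : insF k q0 = insF k p := by
    ext j; rw [mem_insF, mem_insF, ins_transfer hq0R j]
  have hout : ∀ j, j ∉ insF k q0 → q0 j = p j := by
    intro j hj
    have hj' : j ∉ insF k p := hMeq ▸ hj
    exact hq0R.1 j (fun hh => hj' (mem_insF.2 hh))
  have himg : (insF k q0).image p = valF (insF k q0) q0 := by
    rw [valF]
    exact image_inside_eq hpb hq0b (fun j hj => (hout j hj).symm)
  have hpeq : psi k q0 hq0b.1 = p := by
    funext j
    by_cases hj : j ∈ insF k q0
    · symm
      refine anti_unique (insF k q0) q0 hq0b.1 p ?_ ?_ j hj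
      · intro l hl
        rw [← himg]
        exact Finset.mem_image_of_mem p hl
      · intro x hx y hy hxy
        exact (badT_iff_dec hpb.1).1 hT x y (mem_insF.1 (hMeq ▸ hx))
          (mem_insF.1 (hMeq ▸ hy)) hxy
    · rw [psi, psiAux_out _ _ _ hj]
      exact hout j hj
  exact ⟨q0, hq0b, halt, hS0, hpeq⟩

end AltPf

theorem stmt8 (k n : ℕ) (hk : 3 ≤ k) (hn : Even n) (hn0 : 0 < n) :
    Nat.card {p : Fin n → Fin n // Function.Bijective p ∧ Alternating p ∧
      Avoids p (id : Fin k → Fin k)} =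
    Nat.card {p : Fin n → Fin n // Function.Bijective p ∧ Alternating p ∧
      Avoids p ⇑(Equiv.swap (⟨k - 2, by omega⟩ : Fin k) ⟨k - 1, by omega⟩)} := by
  classical
  let Φ : {p : Fin n → Fin n // Function.Bijective p ∧ Alternating p ∧
        Avoids p ⇑(Equiv.swap (⟨k - 2, by omega⟩ : Fin k) ⟨k - 1, by omega⟩)} →
      {p : Fin n → Fin n // Function.Bijective p ∧ Alternating p ∧
        Avoids p (id : Fin k → Fin k)} :=
    fun q => ⟨AltPf.psi k q.1 q.2.1.1, by
      obtain ⟨hb, ha, hav⟩ := q.2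
      have hS : ¬ AltPf.BadS k q.1 := fun hbad =>
        hav ((AltPf.contains_swap_iff hk).2 hbad)
      obtain ⟨h1, h2, h3⟩ := AltPf.psi_maps hk hb ha hS
      exact ⟨h1, h2, fun hc => h3 ((AltPf.contains_id_iff hk).1 hc)⟩⟩
  refine (Nat.card_eq_of_bijective Φ ⟨?_, ?_⟩).symm
  · intro q1 q2 h
    have h' : AltPf.psi k q1.1 q1.2.1.1 = AltPf.psi k q2.1 q2.2.1.1 :=
      congrArg Subtype.val h
    apply Subtype.ext
    exact AltPf.psi_inj_on hk q1.2.1 q2.2.1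
      (fun hbad => q1.2.2.2 ((AltPf.contains_swap_iff hk).2 hbad))
      (fun hbad => q2.2.2.2 ((AltPf.contains_swap_iff hk).2 hbad)) h'
  · rintro ⟨p, hb, ha, hav⟩
    have hT : ¬ AltPf.BadT k p := fun hbad =>
      hav ((AltPf.contains_id_iff hk).2 hbad)
    obtain ⟨q, hqb, hqa, hqS, hqeq⟩ := AltPf.psi_surj_on hk hn hb ha hT
    refine ⟨⟨q, hqb, hqa, fun hc => hqS ((AltPf.contains_swap_iff hk).1 hc)⟩, ?_⟩
    apply Subtype.ext
    exact hqeq
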